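/- In the general Kuroda-type setup, if $\det T_{n-1} \neq 0$, then the elements $\pi_1, \pi_2, \ldots, \pi_{n-1}, X_n$ are algebraically independent over $K$. -/

import Mathlib

open AddMonoidAlgebra Finsupp

section Corner

variable {K : Type*} [Field K] {A : Type*} [AddCommGroup A] (W : A →+ ℚ)

/-- `u` is the unique potential exponent of minimal `W`-weight in the support of `g`. -/
def KurCorner (g : AddMonoidAlgebra K A) (u : A) : Prop :=
  ∀ x ∈ g.coeff.support, W u ≤ W x ∧ (W x = W u → x = u)

lemma kurCorner_single (a : A) (r : K) : KurCorner W (AddMonoidAlgebra.single a r) a := by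
  intro x hx
  rw [AddMonoidAlgebra.coeff_single] at hx
  have hx' := Finsupp.support_single_subset hx
  simp only [Finset.mem_singleton] at hx'
  subst hx'
  exact ⟨le_rfl, fun _ => rfl⟩

lemma KurCorner.uniqueAdd {g h : AddMonoidAlgebra K A} {u v : A}
    (hg : KurCorner W g u) (hh : KurCorner W h v) : UniqueAdd g.coeff.support h.coeff.support u v := by
  intro p q hp hq hpq
  obtain ⟨h1, h2⟩ := hg p hp
  obtain ⟨h3, h4⟩ := hh q hq
  have hw : W p + W q = W u + W v := by rw [← map_add, ← map_add, hpq]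
  have hpu : W p = W u := le_antisymm (by linarith) h1
  have hqv : W q = W v := by linarith
  exact ⟨h2 hpu, h4 hqv⟩

lemma KurCorner.mul {g h : AddMonoidAlgebra K A} {u v : A}
    (hg : KurCorner W g u) (hh : KurCorner W h v) : KurCorner W (g * h) (u + v) := by
  classical
  intro x hx
  have hx' := AddMonoidAlgebra.support_coeff_mul_subset g h hx
  rw [Finset.mem_add] at hx'
  obtain ⟨p, hp, q, hq, rfl⟩ := hx'
  obtain ⟨h1, h2⟩ := hg p hp
  obtain ⟨h3, h4⟩ := hh q hq
  rw [map_add, map_add]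
  refine ⟨add_le_add h1 h3, fun he => ?_⟩
  have hpu : W p = W u := le_antisymm (by linarith) h1
  have hqv : W q = W v := by linarith
  rw [h2 hpu, h4 hqv]

lemma KurCorner.mul_apply {g h : AddMonoidAlgebra K A} {u v : A}
    (hg : KurCorner W g u) (hh : KurCorner W h v) : (g * h).coeff (u + v) = g.coeff u * h.coeff v :=
  AddMonoidAlgebra.coeff_mul_add_of_uniqueAdd (hg.uniqueAdd W hh)

lemma kurCorner_pow {g : AddMonoidAlgebra K A} {u : A} (hg : KurCorner W g u) (k : ℕ) :
    KurCorner W (g ^ k) (k • u) ∧ (g ^ k).coeff (k • u) = (g.coeff u) ^ k := by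
  induction k with
  | zero =>
      simp only [pow_zero, zero_smul]
      exact ⟨by rw [AddMonoidAlgebra.one_def]; exact kurCorner_single W 0 1,
        by rw [AddMonoidAlgebra.one_def]; simp⟩
  | succ k ih =>
      rw [pow_succ, succ_nsmul, pow_succ]
      exact ⟨ih.1.mul W hg, by rw [ih.1.mul_apply W hg, ih.2]⟩

lemma kurCorner_prod {ι : Type*} (s : Finset ι) (f : ι → AddMonoidAlgebra K A) (v : ι → A)
    (h : ∀ i ∈ s, KurCorner W (f i) (v i)) :
    KurCorner W (∏ i ∈ s, f i) (∑ i ∈ s, v i) ∧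
      (∏ i ∈ s, f i).coeff (∑ i ∈ s, v i) = ∏ i ∈ s, (f i).coeff (v i) := by
  classical
  induction s using Finset.cons_induction with
  | empty =>
      simp only [Finset.prod_empty, Finset.sum_empty]
      exact ⟨by rw [AddMonoidAlgebra.one_def]; exact kurCorner_single W 0 1,
        by rw [AddMonoidAlgebra.one_def]; simp⟩
  | cons a s ha ih =>
      rw [Finset.prod_cons, Finset.sum_cons, Finset.prod_cons]
      have ih' := ih (fun i hi => h i (Finset.mem_cons_of_mem hi))
      have ha' := h a (Finset.mem_cons_self a s)
      exact ⟨ha'.mul W ih'.1, by rw [ha'.mul_apply W ih'.1, ih'.2]⟩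

lemma kurCorner_binomial {a b : A} (hab : W b < W a) :
    KurCorner W (AddMonoidAlgebra.single a 1 - AddMonoidAlgebra.single b 1 : AddMonoidAlgebra K A) b ∧
      (AddMonoidAlgebra.single a 1 - AddMonoidAlgebra.single b 1 : AddMonoidAlgebra K A).coeff b = -1 := by
  classical
  have hne : a ≠ b := fun h => by rw [h] at hab; exact lt_irrefl _ hab
  constructor
  · intro x hx
    rw [AddMonoidAlgebra.coeff_sub, AddMonoidAlgebra.coeff_single,
      AddMonoidAlgebra.coeff_single] at hx
    have hx' := Finsupp.support_sub hx
    rw [Finset.mem_union] at hx'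
    rcases hx' with h1 | h1 <;> have h2 := Finsupp.support_single_subset h1 <;>
      simp only [Finset.mem_singleton] at h2 <;> subst h2
    · exact ⟨hab.le, fun h => absurd h hab.ne'⟩
    · exact ⟨le_rfl, fun _ => rfl⟩
  · rw [AddMonoidAlgebra.coeff_sub, AddMonoidAlgebra.coeff_single,
      AddMonoidAlgebra.coeff_single, Finsupp.sub_apply, Finsupp.single_eq_of_ne hne.symm, Finsupp.single_eq_same, zero_sub]

end Corner

/-- The general Kuroda-type element
`π i = Xₙ^(γ i) − X₁^(T i 1) ⋯ X_{n-1}^(T i (n-1)) · Xₙ^(β i)`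
in the Laurent polynomial ring in `n + 1` variables, realized as the group algebra
`K[ℤ^(n+1)]`.  Here `T i` is the `i`-th row of the matrix `T_{n-1}` (whose diagonal
entries are `-α i i` and off-diagonal entries `α i j`), and `β i = α i n ≥ 0`. -/
noncomputable def kurodaPi (K : Type*) [Field K] (n : ℕ)
    (T : Matrix (Fin n) (Fin n) ℤ) (β γ : Fin n → ℤ) (i : Fin n) :
    AddMonoidAlgebra K (Fin (n + 1) → ℤ) :=
  AddMonoidAlgebra.single (Fin.snoc (0 : Fin n → ℤ) (γ i)) 1 -
    AddMonoidAlgebra.single (Fin.snoc (T i) (β i)) 1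

/-- If `det T_{n-1} ≠ 0` then `π₁, …, π_{n-1}, Xₙ` are algebraically independent over `K`. -/
theorem stmt_4 (K : Type*) [Field K] (n : ℕ)
    (T : Matrix (Fin n) (Fin n) ℤ) (β γ : Fin n → ℤ)
    (hγ : ∀ i, 1 ≤ γ i)
    (hdiag : ∀ i, T i i ≤ -1)
    (hoff : ∀ i j, i ≠ j → 1 ≤ T i j)
    (hβ : ∀ i, 0 ≤ β i)
    (hdet : T.det ≠ 0) :
    AlgebraicIndependent K
      (Fin.snoc (kurodaPi K n T β γ)
        (AddMonoidAlgebra.single (Fin.snoc 0 1 : Fin (n + 1) → ℤ) (1 : K))) := by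
  classical
  set Tq : Matrix (Fin n) (Fin n) ℚ := T.map (Int.cast : ℤ → ℚ) with hTq
  have hdetq : Tq.det ≠ 0 := by
    rw [hTq, show T.map (Int.cast : ℤ → ℚ) = (Int.castRingHom ℚ).mapMatrix T from rfl,
      ← RingHom.map_det]
    have h' : ((T.det : ℤ) : ℚ) ≠ 0 := Int.cast_ne_zero.mpr hdet
    simpa using h'
  set w : Fin n → ℚ := Tq⁻¹.mulVec (fun _ => -1) with hw
  have hTw : ∀ i, (∑ j, (T i j : ℚ) * w j) = -1 := by
    intro i
    have h1 : Tq.mulVec w = (fun _ => -1) := by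
      rw [hw, Matrix.mulVec_mulVec, Matrix.mul_nonsing_inv _ (isUnit_iff_ne_zero.mpr hdetq),
        Matrix.one_mulVec]
    have h2 := congrFun h1 i
    simpa [Matrix.mulVec, dotProduct, hTq, Matrix.map_apply] using h2
  set W : (Fin (n+1) → ℤ) →+ ℚ :=
    AddMonoidHom.mk' (fun x => ∑ j, w j * ((x (Fin.castSucc j) : ℤ) : ℚ))
      (by
        intro x y
        simp only [Pi.add_apply, Int.cast_add, mul_add]
        rw [Finset.sum_add_distrib]) with hWdef
  have hWsnoc : ∀ (c : Fin n → ℤ) (t : ℤ), W (Fin.snoc c t) = ∑ j, w j * (c j : ℚ) := by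
    intro c t
    simp [hWdef, Fin.snoc_castSucc]
  set f := (Fin.snoc (kurodaPi K n T β γ)
      (AddMonoidAlgebra.single (Fin.snoc 0 1 : Fin (n + 1) → ℤ) (1 : K)) :
      Fin (n+1) → AddMonoidAlgebra K (Fin (n+1) → ℤ)) with hf
  set v : Fin (n+1) → (Fin (n+1) → ℤ) :=
    Fin.snoc (fun i => Fin.snoc (T i) (β i)) (Fin.snoc 0 1) with hv
  have hcorner : ∀ i, KurCorner W (f i) (v i) ∧ (f i).coeff (v i) ≠ 0 := by
    intro i
    induction i using Fin.lastCases with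
    | last =>
        rw [hf, hv]
        simp only [Fin.snoc_last]
        refine ⟨kurCorner_single W _ _, ?_⟩
        rw [AddMonoidAlgebra.coeff_single]
        simp [Finsupp.single_eq_same]
    | cast i =>
        rw [hf, hv]
        simp only [Fin.snoc_castSucc]
        have hWb : W (Fin.snoc (T i) (β i)) = -1 := by
          rw [hWsnoc, ← hTw i]
          exact Finset.sum_congr rfl (fun j _ => by ring)
        have hlt : W (Fin.snoc (T i) (β i)) < W (Fin.snoc (0 : Fin n → ℤ) (γ i)) := by
          rw [hWb, hWsnoc]
          simp
        obtain ⟨h1, h2⟩ := kurCorner_binomial (K := K) W hlt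
        refine ⟨?_, ?_⟩
        · rw [kurodaPi]; exact h1
        · rw [kurodaPi]
          rw [h2]
          norm_num
  -- the corner exponent of the monomial `d`
  set c : (Fin (n+1) →₀ ℕ) → (Fin (n+1) → ℤ) := fun d => ∑ i, (d i) • v i with hc
  have hinj : ∀ d d' : Fin (n+1) →₀ ℕ, c d = c d' → d = d' := by
    intro d d' hdd
    have hcoord : ∀ (e : Fin (n+1) →₀ ℕ) (j : Fin (n+1)),
        c e j = ∑ i, (e i : ℤ) * v i j := by
      intro e j
      simp only [hc]
      rw [Finset.sum_apply]
      exact Finset.sum_congr rfl (fun i _ => by rw [Pi.smul_apply, nsmul_eq_mul])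
    have hcast : ∀ i : Fin n, d (Fin.castSucc i) = d' (Fin.castSucc i) := by
      set z : Fin n → ℤ := fun i => (d (Fin.castSucc i) : ℤ) - (d' (Fin.castSucc i) : ℤ) with hz
      have hzT : ∀ j : Fin n, ∑ i, z i * T i j = 0 := by
        intro j
        have h1 := congrFun hdd (Fin.castSucc j)
        rw [hcoord d, hcoord d'] at h1
        rw [Fin.sum_univ_castSucc, Fin.sum_univ_castSucc] at h1
        simp only [hv, Fin.snoc_castSucc, Fin.snoc_last, Pi.zero_apply, mul_zero,
          add_zero] at h1
        have : ∑ i, ((d (Fin.castSucc i) : ℤ) - (d' (Fin.castSucc i) : ℤ)) * T i j = 0 := by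
          simp only [sub_mul]
          rw [Finset.sum_sub_distrib, h1, sub_self]
        simpa [hz] using this
      have hzq : Matrix.vecMul (fun i => (z i : ℚ)) Tq = 0 := by
        funext j
        have := hzT j
        have : ((∑ i, z i * T i j : ℤ) : ℚ) = 0 := by rw [this]; simp
        push_cast at this
        simpa [Matrix.vecMul, dotProduct, hTq, Matrix.map_apply] using this
      have hz0 : (fun i => (z i : ℚ)) = 0 := by
        have h1 : Matrix.vecMul (fun i => (z i : ℚ)) (Tq * Tq⁻¹) = 0 := by
          rw [← Matrix.vecMul_vecMul, hzq, Matrix.zero_vecMul]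
        rwa [Matrix.mul_nonsing_inv _ (isUnit_iff_ne_zero.mpr hdetq), Matrix.vecMul_one] at h1
      intro i
      have h2 := congrFun hz0 i
      simp only [Pi.zero_apply, Int.cast_eq_zero] at h2
      have h3 : z i = 0 := by exact_mod_cast h2
      simp only [hz] at h3
      have h4 : (d (Fin.castSucc i) : ℤ) = (d' (Fin.castSucc i) : ℤ) := by linarith
      exact_mod_cast h4
    have hlast : d (Fin.last n) = d' (Fin.last n) := by
      have h1 := congrFun hdd (Fin.last n)
      rw [hcoord d, hcoord d'] at h1
      rw [Fin.sum_univ_castSucc, Fin.sum_univ_castSucc] at h1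
      simp only [hv, Fin.snoc_castSucc, Fin.snoc_last, mul_one] at h1
      have h4 : ∑ x : Fin n, (d (Fin.castSucc x) : ℤ) * β x
          = ∑ x : Fin n, (d' (Fin.castSucc x) : ℤ) * β x :=
        Finset.sum_congr rfl (fun x _ => by rw [hcast x])
      have h3 : (d (Fin.last n) : ℤ) = (d' (Fin.last n) : ℤ) := by linarith
      exact_mod_cast h3
    ext i
    induction i using Fin.lastCases with
    | last => exact hlast
    | cast i => exact hcast i
  rw [algebraicIndependent_iff]
  intro p hp
  by_contra hp0
  have hsupp : p.support.Nonempty :=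
    Finset.nonempty_iff_ne_empty.mpr (fun h => hp0 (MvPolynomial.support_eq_empty.mp h))
  obtain ⟨d0, hd0, hmin⟩ := p.support.exists_min_image (fun d => W (c d)) hsupp
  have hGd : ∀ d : Fin (n+1) →₀ ℕ,
      KurCorner W (∏ i, (f i) ^ (d i)) (c d) ∧
        (∏ i, (f i) ^ (d i)).coeff (c d) = ∏ i, ((f i).coeff (v i)) ^ (d i) := by
    intro d
    have h1 := kurCorner_prod W Finset.univ (fun i => (f i) ^ (d i)) (fun i => (d i) • v i)
      (fun i _ => (kurCorner_pow W (hcorner i).1 (d i)).1)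
    rw [hc]
    refine ⟨h1.1, h1.2.trans ?_⟩
    exact Finset.prod_congr rfl (fun i _ => (kurCorner_pow W (hcorner i).1 (d i)).2)
  have heval : (MvPolynomial.aeval f p : AddMonoidAlgebra K (Fin (n+1) → ℤ)) =
      ∑ d ∈ p.support, (MvPolynomial.coeff d p) • ∏ i, (f i) ^ (d i) := by
    rw [MvPolynomial.aeval_def, MvPolynomial.eval₂_eq']
    exact Finset.sum_congr rfl (fun d _ => by rw [Algebra.smul_def])
  have h0 : (∑ d ∈ p.support, (MvPolynomial.coeff d p) • ∏ i, (f i) ^ (d i)).coeff (c d0) = 0 := by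
    rw [← heval, hp]
    rfl
  rw [AddMonoidAlgebra.coeff_sum, Finsupp.finset_sum_apply] at h0
  have hzero : ∀ d ∈ p.support, d ≠ d0 →
      ((MvPolynomial.coeff d p) • ∏ i, (f i) ^ (d i)).coeff (c d0) = 0 := by
    intro d hd hne
    rw [AddMonoidAlgebra.coeff_smul_apply]
    have hG0 : (∏ i, (f i) ^ (d i)).coeff (c d0) = 0 := by
      by_contra hG
      have hmem : c d0 ∈ (∏ i, (f i) ^ (d i)).coeff.support := Finsupp.mem_support_iff.mpr hG
      obtain ⟨hle, heq⟩ := (hGd d).1 _ hmem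
      have hWeq : W (c d0) = W (c d) := le_antisymm (hmin d hd) hle
      exact hne ((hinj d0 d (heq hWeq)).symm)
    rw [hG0, smul_zero]
  rw [Finset.sum_eq_single_of_mem d0 hd0 hzero] at h0
  rw [AddMonoidAlgebra.coeff_smul_apply, (hGd d0).2, smul_eq_mul] at h0
  have hc0 : MvPolynomial.coeff d0 p ≠ 0 := MvPolynomial.mem_support_iff.mp hd0
  have hprod : (∏ i, ((f i).coeff (v i)) ^ (d0 i)) ≠ 0 :=
    Finset.prod_ne_zero_iff.mpr (fun i _ => pow_ne_zero _ (hcorner i).2)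
  exact (mul_ne_zero hc0 hprod) h0
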